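/- Let n ≥ 1 be an integer, let D ≥ 1, and let K ⊆ ℝⁿ be a convex body with B(0, 1) ⊆ K ⊆ B(0, D), where B(0, ρ) denotes the closed Euclidean ball of radius ρ centered at the origin. Define the cone C := {(x₀, x̄) ∈ ℝ × ℝⁿ : x₀ ≥ 0 and ‖x̄‖ ≤ x₀} and the pencil K' := ([0, 2D] × K) ∩ C ⊆ ℝ^{n+1}. Then D · vol_n(K) ≤ vol_{n+1}(K') ≤ 2D · vol_n(K), where vol_k denotes k-dimensional Lebesgue measure. -/
import Mathlib


open MeasureTheory

/-- Pencil construction. Let `K ⊆ ℝⁿ` be a convex body with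
`B(0,1) ⊆ K ⊆ B(0,D)` for some `D ≥ 1`. With the cone
`C = {(x₀, x̄) : x₀ ≥ 0, ‖x̄‖ ≤ x₀}` and pencil `K' = ([0, 2D] × K) ∩ C ⊆ ℝ^{n+1}`,
we have `D · vol_n(K) ≤ vol_{n+1}(K') ≤ 2D · vol_n(K)`. -/
theorem pencil_volume_bounds
    (n : ℕ) (hn : 1 ≤ n) (D : ℝ) (hD : 1 ≤ D)
    (K : Set (EuclideanSpace ℝ (Fin n)))
    (hK_compact : IsCompact K) (hK_convex : Convex ℝ K)
    (hK_interior : (interior K).Nonempty)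
    (hK_lower : Metric.closedBall 0 1 ⊆ K)
    (hK_upper : K ⊆ Metric.closedBall 0 D)
    (C K' : Set (ℝ × EuclideanSpace ℝ (Fin n)))
    (hC : C = {x : ℝ × EuclideanSpace ℝ (Fin n) | 0 ≤ x.1 ∧ ‖x.2‖ ≤ x.1})
    (hK' : K' = (Set.Icc (0 : ℝ) (2 * D) ×ˢ K) ∩ C) :
    ENNReal.ofReal D * volume K ≤ volume K' ∧
    volume K' ≤ ENNReal.ofReal (2 * D) * volume K := by
  have hD0 : (0 : ℝ) ≤ D := le_trans zero_le_one hD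
  have hsub1 : Set.Icc D (2 * D) ×ˢ K ⊆ K' := by
    rintro ⟨t, x⟩ ⟨ht, hx⟩
    simp only [Set.mem_Icc] at ht
    refine hK' ▸ ⟨⟨⟨le_trans hD0 ht.1, ht.2⟩, hx⟩, hC ▸ ⟨le_trans hD0 ht.1, ?_⟩⟩
    have := hK_upper hx
    rw [Metric.mem_closedBall, dist_zero_right] at this
    exact le_trans this ht.1
  have hsub2 : K' ⊆ Set.Icc (0 : ℝ) (2 * D) ×ˢ K := by
    rw [hK']; exact Set.inter_subset_left
  have hprod : (volume : Measure (ℝ × EuclideanSpace ℝ (Fin n)))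
      = (volume : Measure ℝ).prod volume := MeasureTheory.Measure.volume_eq_prod _ _
  constructor
  · calc ENNReal.ofReal D * volume K
        = volume (Set.Icc D (2 * D) ×ˢ K) := by
          rw [hprod, Measure.prod_prod, Real.volume_Icc]
          ring_nf
      _ ≤ volume K' := measure_mono hsub1
  · calc volume K' ≤ volume (Set.Icc (0 : ℝ) (2 * D) ×ˢ K) := measure_mono hsub2
      _ = ENNReal.ofReal (2 * D) * volume K := by
          rw [hprod, Measure.prod_prod, Real.volume_Icc, sub_zero]
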